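/- The determinant of U(ε) equals (1/c)·(3ε² + 2c²·(−3·(1 − ε/c)² + 4·(1 − ε/c)^{3/2} − 1)). -/

import Mathlib

theorem my_det_fin_four (M : Matrix (Fin 4) (Fin 4) ℝ) :
    M.det =
      M 0 0 * M 1 1 * M 2 2 * M 3 3 - M 0 0 * M 1 1 * M 2 3 * M 3 2 -
        M 0 0 * M 1 2 * M 2 1 * M 3 3 + M 0 0 * M 1 2 * M 2 3 * M 3 1 +
        M 0 0 * M 1 3 * M 2 1 * M 3 2 - M 0 0 * M 1 3 * M 2 2 * M 3 1 -
        M 0 1 * M 1 0 * M 2 2 * M 3 3 + M 0 1 * M 1 0 * M 2 3 * M 3 2 +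
        M 0 1 * M 1 2 * M 2 0 * M 3 3 - M 0 1 * M 1 2 * M 2 3 * M 3 0 -
        M 0 1 * M 1 3 * M 2 0 * M 3 2 + M 0 1 * M 1 3 * M 2 2 * M 3 0 +
        M 0 2 * M 1 0 * M 2 1 * M 3 3 - M 0 2 * M 1 0 * M 2 3 * M 3 1 -
        M 0 2 * M 1 1 * M 2 0 * M 3 3 + M 0 2 * M 1 1 * M 2 3 * M 3 0 +
        M 0 2 * M 1 3 * M 2 0 * M 3 1 - M 0 2 * M 1 3 * M 2 1 * M 3 0 -
        M 0 3 * M 1 0 * M 2 1 * M 3 2 + M 0 3 * M 1 0 * M 2 2 * M 3 1 +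
        M 0 3 * M 1 1 * M 2 0 * M 3 2 - M 0 3 * M 1 1 * M 2 2 * M 3 0 -
        M 0 3 * M 1 2 * M 2 0 * M 3 1 + M 0 3 * M 1 2 * M 2 1 * M 3 0 := by
  rw [Matrix.det_succ_row_zero]
  simp [Fin.sum_univ_succ, Matrix.det_fin_three, Fin.succAbove,
    show (Fin.succ 2 : Fin 4) = 3 from rfl, show Fin.castSucc 2 = (2 : Fin 4) from rfl]
  norm_num [Fin.lt_def]
  ring

/-- The symmetric 4×4 matrix `U(ε)` with diagonal entries `u i` and off-diagonal
entries `√(u i · u j · (1 − ε/c))`. -/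
noncomputable def Umat (u : Fin 4 → ℝ) (c ε : ℝ) : Matrix (Fin 4) (Fin 4) ℝ :=
  Matrix.of fun i j => if i = j then u i else Real.sqrt (u i * u j * (1 - ε / c))

/-- The determinant of `U(ε)` equals
`(1/c) · (3ε² + 2c²·(−3(1 − ε/c)² + 4(1 − ε/c)^{3/2} − 1))`, where the exponent
`3/2` denotes the real power. -/
theorem Umat_det (u : Fin 4 → ℝ) (hu : ∀ i, 0 < u i)
    (c ε : ℝ) (hc : c = u 0 * u 1 * u 2 * u 3)
    (hε0 : 0 ≤ ε) (hεc : ε ≤ c) :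
    Matrix.det (Umat u c ε)
      = (1 / c) * (3 * ε ^ 2
          + 2 * c ^ 2 * (-3 * (1 - ε / c) ^ 2 + 4 * (1 - ε / c) ^ ((3 : ℝ) / 2) - 1)) := by
  have hc0 : 0 < c := by
    rw [hc]; exact mul_pos (mul_pos (mul_pos (hu 0) (hu 1)) (hu 2)) (hu 3)
  have ht : 0 ≤ 1 - ε / c := by
    have : ε / c ≤ 1 := (div_le_one hc0).2 hεc
    linarith
  set s : ℝ := Real.sqrt (1 - ε / c) with hs_def
  have hs0 : 0 ≤ s := Real.sqrt_nonneg _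
  have hs : s ^ 2 = 1 - ε / c := Real.sq_sqrt ht
  set a : Fin 4 → ℝ := fun i => Real.sqrt (u i) with ha_def
  have ha : ∀ i, a i ^ 2 = u i := fun i => Real.sq_sqrt (hu i).le
  have ha0 : ∀ i, 0 < a i := fun i => Real.sqrt_pos.2 (hu i)
  have entry : ∀ i j, Real.sqrt (u i * u j * (1 - ε / c)) = a i * a j * s := by
    intro i j
    rw [Real.sqrt_mul (mul_pos (hu i) (hu j)).le, Real.sqrt_mul (hu i).le]
  have hrpow : (1 - ε / c) ^ ((3 : ℝ) / 2) = s ^ 3 := by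
    rw [← hs, ← Real.rpow_natCast s 2, ← Real.rpow_mul hs0]
    norm_num
  have hε : ε = c * (1 - s ^ 2) := by
    rw [hs]; field_simp; ring
  have hcu : c = a 0 ^ 2 * a 1 ^ 2 * a 2 ^ 2 * a 3 ^ 2 := by
    rw [hc, ha 0, ha 1, ha 2, ha 3]
  rw [hrpow, show (1 - ε / c) = s ^ 2 from hs.symm]
  rw [my_det_fin_four]
  simp only [Umat, Matrix.of_apply]
  simp only [Fin.isValue, Fin.reduceEq, if_true, if_false, reduceIte]
  norm_num [entry]
  rw [← ha 0, ← ha 1, ← ha 2, ← ha 3, hε, hcu]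
  have h0 := (ha0 0).ne'
  have h1 := (ha0 1).ne'
  have h2 := (ha0 2).ne'
  have h3 := (ha0 3).ne'
  field_simp
  ring
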